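/- arXiv:1403.4134 — 3 statements merged into one kernel-verified Lean document; each statement's English description precedes it below -/
import Mathlib

section
/- (Convergence of inhomogeneous Markov chains) Let π ∈ ℝⁿ be a probability vector, and fix constants ξ_min > 0 and a ∈ (0,1]. Let (ξ_k)_{k≥0} be a sequence with ξ_k ∈ {0} ∪ [ξ_min, 1] for all k and ξ_k > 0 for infinitely many k, and let (α_k)_{k≥0} be a sequence of vectors in ℝⁿ with a ≤ α_k[ℓ] ≤ 1 for all k, ℓ. Set M_k = M(ξ_k, α_k). Then for every probability vector x₀ ∈ ℝⁿ, the products x_k = x₀·M₀·M₁·⋯·M_{k−1} converge pointwise to π as k → ∞. -/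
open Matrix BigOperators Finset Filter

/-- The family of Markov transition matrices `M(ξ,α)` with stationary distribution `pi`:
`M[i,ℓ] = (ξ/(π·α))·α[i]·π[ℓ]·α[ℓ]` for `i ≠ ℓ`, and
`M[i,i] = 1 − ξ·α[i] + (ξ/(π·α))·α[i]²·π[i]`. -/
noncomputable def Mmat {n : ℕ} (pi α : Fin n → ℝ) (ξ : ℝ) : Matrix (Fin n) (Fin n) ℝ :=
  fun i ℓ =>
    if i = ℓ then 1 - ξ * α i + (ξ / (∑ q, pi q * α q)) * (α i) ^ 2 * pi i
    else (ξ / (∑ q, pi q * α q)) * α i * pi ℓ * α ℓ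

lemma vecMul_Mmat {n : ℕ} (pi α : Fin n → ℝ) (ξ : ℝ) (x : Fin n → ℝ) (ℓ : Fin n) :
    (x ᵥ* Mmat pi α ξ) ℓ = x ℓ * (1 - ξ * α ℓ)
      + (ξ / (∑ q, pi q * α q)) * pi ℓ * α ℓ * (∑ i, x i * α i) := by
  classical
  have h : ∀ i, x i * Mmat pi α ξ i ℓ =
      (if i = ℓ then x ℓ * (1 - ξ * α ℓ) else 0)
      + (ξ / (∑ q, pi q * α q)) * pi ℓ * α ℓ * (x i * α i) := by
    intro i
    by_cases hi : i = ℓ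
    · subst hi; simp [Mmat]; ring
    · simp [Mmat, hi]; ring
  simp only [vecMul, dotProduct]
  rw [Finset.sum_congr rfl fun i _ => h i, Finset.sum_add_distrib,
    Finset.sum_ite_eq' Finset.univ ℓ, ← Finset.mul_sum]
  simp

lemma key_comb {n : ℕ} (a : ℝ) (ha0 : 0 ≤ a) (α e : Fin n → ℝ)
    (hα : ∀ i, a ≤ α i) (he : ∑ i, e i = 0) :
    a * ∑ i, |e i| + |∑ i, α i * e i| ≤ ∑ i, α i * |e i| := by
  classical
  set P := ∑ i, max (e i) 0 with hP
  set Q := ∑ i, max (-(e i)) 0 with hQ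
  have hPQ : P = Q := by
    have h1 : P - Q = ∑ i, e i := by
      rw [hP, hQ, ← Finset.sum_sub_distrib]
      exact Finset.sum_congr rfl fun i _ => max_zero_sub_max_neg_zero_eq_self (e i)
    have := h1.trans he
    linarith
  set A := ∑ i, α i * max (e i) 0 with hA
  set B := ∑ i, α i * max (-(e i)) 0 with hB
  have hmax0 : ∀ t : ℝ, 0 ≤ max t 0 := fun t => le_max_right t 0
  have haP : a * P ≤ A := by
    rw [hP, hA, Finset.mul_sum]
    exact Finset.sum_le_sum fun i _ => mul_le_mul_of_nonneg_right (hα i) (hmax0 _)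
  have haQ : a * Q ≤ B := by
    rw [hQ, hB, Finset.mul_sum]
    exact Finset.sum_le_sum fun i _ => mul_le_mul_of_nonneg_right (hα i) (hmax0 _)
  have habs : ∑ i, α i * |e i| = A + B := by
    rw [hA, hB, ← Finset.sum_add_distrib]
    refine Finset.sum_congr rfl fun i _ => ?_
    rw [← mul_add]
    congr 1
    rcases le_total 0 (e i) with h | h
    · rw [abs_of_nonneg h, max_eq_left h, max_eq_right (by linarith)]; ring
    · rw [abs_of_nonpos h, max_eq_right h, max_eq_left (by linarith)]; ring
  have hsig : ∑ i, α i * e i = A - B := by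
    rw [hA, hB, ← Finset.sum_sub_distrib]
    refine Finset.sum_congr rfl fun i _ => ?_
    rw [← mul_sub, max_zero_sub_max_neg_zero_eq_self]
  have hsumabs : ∑ i, |e i| = P + Q := by
    rw [hP, hQ, ← Finset.sum_add_distrib]
    refine Finset.sum_congr rfl fun i _ => ?_
    rcases le_total 0 (e i) with h | h
    · rw [abs_of_nonneg h, max_eq_left h, max_eq_right (by linarith)]; ring
    · rw [abs_of_nonpos h, max_eq_right h, max_eq_left (by linarith)]; ring
  rw [habs, hsig, hsumabs]
  rcases le_total A B with h | h
  · rw [abs_of_nonpos (by linarith)]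
    nlinarith
  · rw [abs_of_nonneg (by linarith)]
    nlinarith

lemma S_pos {n : ℕ} (pi α : Fin n → ℝ) (a : ℝ)
    (hpi0 : ∀ i, 0 ≤ pi i) (hpi1 : ∑ i, pi i = 1) (ha0 : 0 < a)
    (hα : ∀ ℓ, a ≤ α ℓ) : a ≤ ∑ q, pi q * α q := by
  calc a = ∑ q, pi q * a := by rw [← Finset.sum_mul, hpi1, one_mul]
  _ ≤ ∑ q, pi q * α q :=
    Finset.sum_le_sum fun q _ => mul_le_mul_of_nonneg_left (hα q) (hpi0 q)

lemma sum_vecMul_Mmat {n : ℕ} (pi α : Fin n → ℝ) (ξ a : ℝ)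
    (hpi0 : ∀ i, 0 ≤ pi i) (hpi1 : ∑ i, pi i = 1) (ha0 : 0 < a)
    (hα : ∀ ℓ, a ≤ α ℓ) (x : Fin n → ℝ) :
    ∑ ℓ, (x ᵥ* Mmat pi α ξ) ℓ = ∑ i, x i := by
  have hS : (0:ℝ) < ∑ q, pi q * α q := lt_of_lt_of_le ha0 (S_pos pi α a hpi0 hpi1 ha0 hα)
  have hcS : ξ / (∑ q, pi q * α q) * (∑ q, pi q * α q) = ξ := div_mul_cancel₀ _ hS.ne'
  simp only [vecMul_Mmat]
  rw [Finset.sum_add_distrib]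
  have h1 : ∑ ℓ, x ℓ * (1 - ξ * α ℓ) = ∑ i, x i - ξ * ∑ i, x i * α i := by
    rw [Finset.mul_sum, ← Finset.sum_sub_distrib]
    exact Finset.sum_congr rfl fun i _ => by ring
  have h2 : ∑ ℓ, (ξ / (∑ q, pi q * α q)) * pi ℓ * α ℓ * (∑ i, x i * α i)
      = ξ * ∑ i, x i * α i := by
    rw [← Finset.sum_mul]
    congr 1
    calc (∑ ℓ, ξ / (∑ q, pi q * α q) * pi ℓ * α ℓ)
        = ξ / (∑ q, pi q * α q) * ∑ ℓ, pi ℓ * α ℓ := by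
          rw [Finset.mul_sum]; exact Finset.sum_congr rfl fun ℓ _ => by ring
      _ = ξ := hcS
  rw [h1, h2]; ring

lemma step_ineq {n : ℕ} (pi α : Fin n → ℝ) (ξ a : ℝ)
    (hpi0 : ∀ i, 0 ≤ pi i) (hpi1 : ∑ i, pi i = 1)
    (ha0 : 0 < a) (ha1 : a ≤ 1) (hα : ∀ ℓ, a ≤ α ℓ ∧ α ℓ ≤ 1)
    (hξ0 : 0 ≤ ξ) (hξ1 : ξ ≤ 1)
    (x : Fin n → ℝ) (hx1 : ∑ i, x i = 1) :
    ∑ i, |(x ᵥ* Mmat pi α ξ) i - pi i| ≤ (1 - ξ * a) * ∑ i, |x i - pi i| := by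
  set S := ∑ q, pi q * α q with hSdef
  have hS : (0:ℝ) < S := lt_of_lt_of_le ha0 (S_pos pi α a hpi0 hpi1 ha0 fun ℓ => (hα ℓ).1)
  have hcS : ξ / S * S = ξ := div_mul_cancel₀ _ hS.ne'
  have hc0 : 0 ≤ ξ / S := div_nonneg hξ0 hS.le
  set e : Fin n → ℝ := fun i => x i - pi i with he
  have hesum : ∑ i, e i = 0 := by
    simp only [he, Finset.sum_sub_distrib, hx1, hpi1, sub_self]
  set T := ∑ i, α i * e i with hT
  have hptw : ∀ ℓ, (x ᵥ* Mmat pi α ξ) ℓ - pi ℓ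
      = e ℓ * (1 - ξ * α ℓ) + (ξ / S) * pi ℓ * α ℓ * T := by
    intro ℓ
    rw [vecMul_Mmat]
    have hxα : ∑ i, x i * α i = T + S := by
      rw [hT, hSdef, ← Finset.sum_add_distrib]
      exact Finset.sum_congr rfl fun i _ => by simp [he]; ring
    rw [hxα]
    simp only [he]
    linear_combination pi ℓ * α ℓ * hcS
  have hbound : ∀ ℓ, |(x ᵥ* Mmat pi α ξ) ℓ - pi ℓ|
      ≤ (1 - ξ * α ℓ) * |e ℓ| + (ξ / S) * pi ℓ * α ℓ * |T| := by
    intro ℓ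
    rw [hptw ℓ]
    have h1 : 0 ≤ 1 - ξ * α ℓ := by nlinarith [(hα ℓ).1, (hα ℓ).2]
    have h2 : 0 ≤ (ξ / S) * pi ℓ * α ℓ :=
      mul_nonneg (mul_nonneg hc0 (hpi0 ℓ)) (le_trans ha0.le (hα ℓ).1)
    calc |e ℓ * (1 - ξ * α ℓ) + (ξ / S) * pi ℓ * α ℓ * T|
        ≤ |e ℓ * (1 - ξ * α ℓ)| + |(ξ / S) * pi ℓ * α ℓ * T| := abs_add_le _ _
      _ = (1 - ξ * α ℓ) * |e ℓ| + (ξ / S) * pi ℓ * α ℓ * |T| := by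
          rw [abs_mul, abs_mul, abs_of_nonneg h1, abs_of_nonneg h2]; ring
  calc ∑ i, |(x ᵥ* Mmat pi α ξ) i - pi i|
      ≤ ∑ ℓ, ((1 - ξ * α ℓ) * |e ℓ| + (ξ / S) * pi ℓ * α ℓ * |T|) :=
        Finset.sum_le_sum fun ℓ _ => hbound ℓ
    _ = ∑ ℓ, |e ℓ| - ξ * ∑ ℓ, α ℓ * |e ℓ| + ξ * |T| := by
        rw [Finset.sum_add_distrib]
        have h1 : ∑ ℓ, (1 - ξ * α ℓ) * |e ℓ| = ∑ ℓ, |e ℓ| - ξ * ∑ ℓ, α ℓ * |e ℓ| := by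
          rw [Finset.mul_sum, ← Finset.sum_sub_distrib]
          exact Finset.sum_congr rfl fun ℓ _ => by ring
        have h2 : ∑ ℓ, (ξ / S) * pi ℓ * α ℓ * |T| = ξ * |T| := by
          rw [← Finset.sum_mul]
          congr 1
          calc (∑ ℓ, ξ / S * pi ℓ * α ℓ) = ξ / S * ∑ ℓ, pi ℓ * α ℓ := by
                rw [Finset.mul_sum]; exact Finset.sum_congr rfl fun ℓ _ => by ring
            _ = ξ := hcS
        rw [h1, h2]
    _ ≤ (1 - ξ * a) * ∑ i, |x i - pi i| := by
        have hkey := key_comb a ha0.le α e (fun i => (hα i).1) hesum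
        rw [← hT] at hkey
        have := mul_le_mul_of_nonneg_left hkey hξ0
        have hee : ∑ i, |x i - pi i| = ∑ ℓ, |e ℓ| := rfl
        rw [hee]
        nlinarith

/-- convergence of the inhomogeneous Markov chain. If `ξ_k ∈ {0} ∪ [ξmin, 1]`
with `ξ_k > 0` infinitely often, and `a ≤ α_k[ℓ] ≤ 1`, then for any initial probability
vector `x₀` the iterates `x_{k+1} = x_k · M(ξ_k, α_k)` converge pointwise to `pi`. -/
theorem stmt8 {n : ℕ} (hn : 1 ≤ n) (pi : Fin n → ℝ)
    (hpi0 : ∀ i, 0 ≤ pi i) (hpi1 : ∑ i, pi i = 1)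
    (ξmin : ℝ) (hξmin : 0 < ξmin) (a : ℝ) (ha0 : 0 < a) (ha1 : a ≤ 1)
    (ξ : ℕ → ℝ) (hξ : ∀ k, ξ k = 0 ∨ (ξmin ≤ ξ k ∧ ξ k ≤ 1))
    (hξinf : ∀ N : ℕ, ∃ k, N ≤ k ∧ 0 < ξ k)
    (α : ℕ → Fin n → ℝ) (hα : ∀ k ℓ, a ≤ α k ℓ ∧ α k ℓ ≤ 1)
    (x₀ : Fin n → ℝ) (hx₀0 : ∀ i, 0 ≤ x₀ i) (hx₀1 : ∑ i, x₀ i = 1)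
    (x : ℕ → Fin n → ℝ) (hx0 : x 0 = x₀)
    (hxk : ∀ k, x (k + 1) = x k ᵥ* Mmat pi (α k) (ξ k)) :
    ∀ i, Tendsto (fun k => x k i) atTop (nhds (pi i)) := by
  have hξ01 : ∀ k, 0 ≤ ξ k ∧ ξ k ≤ 1 := by
    intro k
    rcases hξ k with h | ⟨h1, h2⟩
    · exact ⟨le_of_eq h.symm, h ▸ zero_le_one⟩
    · exact ⟨le_trans hξmin.le h1, h2⟩
  have hsum : ∀ k, ∑ i, x k i = 1 := by
    intro k
    induction k with
    | zero => rw [hx0]; exact hx₀1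
    | succ k ih =>
      rw [hxk k, sum_vecMul_Mmat pi (α k) (ξ k) a hpi0 hpi1 ha0 (fun ℓ => (hα k ℓ).1)]
      exact ih
  set V : ℕ → ℝ := fun k => ∑ i, |x k i - pi i| with hV
  have hV0 : ∀ k, 0 ≤ V k := fun k => Finset.sum_nonneg fun i _ => abs_nonneg _
  have hstep : ∀ k, V (k + 1) ≤ (1 - ξ k * a) * V k := by
    intro k
    simp only [hV]
    rw [hxk k]
    exact step_ineq pi (α k) (ξ k) a hpi0 hpi1 ha0 ha1 (hα k) (hξ01 k).1 (hξ01 k).2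
      (x k) (hsum k)
  have hanti : Antitone V := antitone_nat_of_succ_le fun k =>
    le_trans (hstep k) (by nlinarith [hV0 k, mul_nonneg (hξ01 k).1 ha0.le])
  have hξmin1 : ξmin ≤ 1 := by
    obtain ⟨k0, _, hk0⟩ := hξinf 0
    rcases hξ k0 with h | ⟨h1, h2⟩
    · exact absurd h hk0.ne'
    · exact le_trans h1 h2
  set r : ℝ := 1 - ξmin * a with hr
  have hr0 : 0 ≤ r := by nlinarith
  have hr1 : r < 1 := by nlinarith
  have hstep' : ∀ k, 0 < ξ k → V (k + 1) ≤ r * V k := by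
    intro k hk
    rcases hξ k with h | ⟨h1, h2⟩
    · exact absurd h hk.ne'
    · refine le_trans (hstep k) (mul_le_mul_of_nonneg_right ?_ (hV0 k))
      nlinarith
  have hbdd : BddBelow (Set.range V) := ⟨0, by rintro y ⟨k, rfl⟩; exact hV0 k⟩
  have hL : Tendsto V atTop (nhds (⨅ k, V k)) := tendsto_atTop_ciInf hanti hbdd
  have hL0 : 0 ≤ ⨅ k, V k := le_ciInf hV0
  have hfreq : ∃ᶠ k in atTop, 0 < ξ k := by
    rw [frequently_atTop]
    intro N
    obtain ⟨k, h1, h2⟩ := hξinf N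
    exact ⟨k, h1, h2⟩
  obtain ⟨φ, hφmono, hφ⟩ := Filter.extraction_of_frequently_atTop hfreq
  have h1 : Tendsto (fun j => V (φ j)) atTop (nhds (⨅ k, V k)) :=
    hL.comp hφmono.tendsto_atTop
  have h2 : Tendsto (fun j => V (φ j + 1)) atTop (nhds (⨅ k, V k)) :=
    hL.comp (StrictMono.tendsto_atTop fun a b h => Nat.succ_lt_succ (hφmono h))
  have hle : (⨅ k, V k) ≤ r * ⨅ k, V k :=
    le_of_tendsto_of_tendsto' h2 (h1.const_mul r) fun j => hstep' (φ j) (hφ j)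
  have hLz : (⨅ k, V k) = 0 := by nlinarith
  have hVz : Tendsto V atTop (nhds 0) := hLz ▸ hL
  intro i
  have hb : ∀ k, |x k i - pi i| ≤ V k := fun k =>
    Finset.single_le_sum (f := fun j => |x k j - pi j|) (fun j _ => abs_nonneg _)
      (Finset.mem_univ i)
  have h3 : Tendsto (fun k => |x k i - pi i|) atTop (nhds 0) :=
    squeeze_zero (fun k => abs_nonneg _) hb hVz
  have h4 : Tendsto (fun k => x k i - pi i) atTop (nhds 0) := by
    rwa [tendsto_zero_iff_abs_tendsto_zero]
  have h5 := h4.add_const (pi i)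
  simpa using h5
end

section
/- (Primitivity of the constrained Markov matrix) Let π ∈ ℝⁿ be a probability vector with π[i] > 0 for all i, let ξ ∈ (0,1] and α ∈ ℝⁿ with 0 < α[ℓ] ≤ 1 for all ℓ, and let M = M(ξ,α). Let A ∈ {0,1}^{n×n} be symmetric with A[i,i] = 1 for all i, such that the directed graph on {1,…,n} with an edge from i to ℓ whenever A[i,ℓ] = 1 is strongly connected. Let M̃ be the modification of M by A (forbidden off-diagonal entries set to zero and their mass added to the diagonal). Then the matrix power (M̃)ⁿ is entrywise strictly positive; i.e., M̃ is a primitive matrix. -/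
open Matrix BigOperators Finset Filter

/-- The modification of a Markov matrix `M` by a 0-1 motion-constraint matrix `A`:
forbidden off-diagonal transition probabilities are set to zero and their mass is
moved onto the diagonal. -/
noncomputable def modM {n : ℕ} (A M : Matrix (Fin n) (Fin n) ℝ) : Matrix (Fin n) (Fin n) ℝ :=
  fun i ℓ =>
    if i = ℓ then M i i + ∑ j ∈ Finset.univ.filter (fun j => j ≠ i ∧ A i j = 0), M i j
    else A i ℓ * M i ℓ


lemma pow_entry_nonneg {n : ℕ} (M : Matrix (Fin n) (Fin n) ℝ)
    (h : ∀ i j, 0 ≤ M i j) : ∀ k i j, 0 ≤ (M ^ k) i j := by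
  intro k
  induction k with
  | zero =>
    intro i j
    simp only [pow_zero, Matrix.one_apply]
    split <;> norm_num
  | succ k ih =>
    intro i j
    rw [pow_succ, Matrix.mul_apply]
    exact Finset.sum_nonneg fun m _ => mul_nonneg (ih i m) (h m j)

lemma key_pos {n : ℕ} (M : Matrix (Fin n) (Fin n) ℝ)
    (hnn : ∀ i j, 0 ≤ M i j) (hdiag : ∀ i, 0 < M i i)
    (hconn : ∀ i j, Relation.ReflTransGen (fun a b => 0 < M a b) i j) :
    ∀ i j, 0 < (M ^ n) i j := by
  intro i
  set S : ℕ → Finset (Fin n) := fun k => univ.filter fun ℓ => 0 < (M ^ k) i ℓ with hS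
  have memS : ∀ k ℓ, ℓ ∈ S k ↔ 0 < (M ^ k) i ℓ := by
    intro k ℓ; simp [hS]
  have succ_char : ∀ k ℓ, ℓ ∈ S (k + 1) ↔ ∃ j ∈ S k, 0 < M j ℓ := by
    intro k ℓ
    rw [memS, pow_succ, Matrix.mul_apply]
    constructor
    · intro h
      have : ∑ _j : Fin n, (0 : ℝ) < ∑ j, (M ^ k) i j * M j ℓ := by simpa using h
      obtain ⟨j, _, hj⟩ := Finset.exists_lt_of_sum_lt this
      rcases mul_pos_iff.mp hj with ⟨h1, h2⟩ | ⟨h1, h2⟩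
      · exact ⟨j, (memS k j).mpr h1, h2⟩
      · exact absurd h1 (not_lt.mpr (pow_entry_nonneg M hnn k i j))
    · rintro ⟨j, hj, hjℓ⟩
      exact Finset.sum_pos'
        (fun m _ => mul_nonneg (pow_entry_nonneg M hnn k i m) (hnn m ℓ))
        ⟨j, Finset.mem_univ j, mul_pos ((memS k j).mp hj) hjℓ⟩
  have mono : ∀ k, S k ⊆ S (k + 1) := by
    intro k j hj
    exact (succ_char k j).mpr ⟨j, hj, hdiag j⟩
  have mono' : ∀ k m, k ≤ m → S k ⊆ S m := by
    intro k m hkm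
    induction m with
    | zero => simp_all
    | succ m ih =>
      rcases Nat.lt_or_ge k (m+1) with h | h
      · exact (ih (Nat.lt_succ_iff.mp h)).trans (mono m)
      · have : k = m + 1 := le_antisymm hkm h
        subst this; exact subset_rfl
  have hi0 : i ∈ S 0 := by
    rw [memS, pow_zero, Matrix.one_apply_eq]; norm_num
  -- stabilization
  have hstab : ∃ k < n, S k = S (k + 1) := by
    by_contra h
    push_neg at h
    have hcard : ∀ k, k ≤ n → k + 1 ≤ (S k).card := by
      intro k
      induction k with
      | zero => intro _; exact Finset.card_pos.mpr ⟨i, hi0⟩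
      | succ k ih =>
        intro hk
        have hk' : k ≤ n := Nat.le_of_succ_le hk
        have h1 := ih hk'
        have hss : S k ⊂ S (k + 1) :=
          Finset.ssubset_iff_of_subset (mono k) |>.mpr (by
            have hne := h k (Nat.lt_of_succ_le hk)
            rcases Finset.exists_of_ssubset (lt_of_le_of_ne (mono k) hne) with ⟨x, hx1, hx2⟩
            exact ⟨x, hx1, hx2⟩)
        have := Finset.card_lt_card hss
        omega
    have h1 := hcard n le_rfl
    have h2 : (S n).card ≤ n := by
      simpa using (Finset.card_le_univ (S n))
    omega
  obtain ⟨k₀, hk₀n, hk₀⟩ := hstab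
  have closure : ∀ j ∈ S k₀, ∀ ℓ, 0 < M j ℓ → ℓ ∈ S k₀ := by
    intro j hj ℓ hℓ
    rw [hk₀]
    exact (succ_char k₀ ℓ).mpr ⟨j, hj, hℓ⟩
  have hall : ∀ ℓ, ℓ ∈ S k₀ := by
    intro ℓ
    have hi : i ∈ S k₀ := mono' 0 k₀ (Nat.zero_le _) hi0
    induction hconn i ℓ with
    | refl => exact hi
    | tail _ hcd ih => exact closure _ ih _ hcd
  intro j
  exact (memS n j).mp (mono' k₀ n (le_of_lt hk₀n) (hall j))


/-- primitivity of the constrained Markov matrix. If `pi` is entrywise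
positive, `ξ > 0`, and the graph of the symmetric 0-1 constraint matrix `A` (with unit
diagonal) is strongly connected, then the `n`-th power of the modified matrix
`M̃ = modM A (M(ξ,α))` is entrywise strictly positive, i.e. `M̃` is primitive. -/
theorem stmt12 {n : ℕ} (hn : 1 ≤ n) (pi : Fin n → ℝ)
    (hpi0 : ∀ i, 0 < pi i) (hpi1 : ∑ i, pi i = 1)
    (ξ : ℝ) (hξ0 : 0 < ξ) (hξ1 : ξ ≤ 1)
    (α : Fin n → ℝ) (hα0 : ∀ ℓ, 0 < α ℓ) (hα1 : ∀ ℓ, α ℓ ≤ 1)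
    (A : Matrix (Fin n) (Fin n) ℝ)
    (hA01 : ∀ i ℓ, A i ℓ = 0 ∨ A i ℓ = 1)
    (hAsymm : ∀ i ℓ, A i ℓ = A ℓ i)
    (hAdiag : ∀ i, A i i = 1)
    (hASC : ∀ i ℓ, Relation.ReflTransGen (fun a b => A a b = 1) i ℓ) :
    ∀ i ℓ, 0 < ((modM A (Mmat pi α ξ)) ^ n) i ℓ := by
  have hnpos : 0 < n := hn
  haveI : Nonempty (Fin n) := Fin.pos_iff_nonempty.mp hnpos
  set M := Mmat pi α ξ with hM
  have hs : 0 < ∑ q, pi q * α q :=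
    Finset.sum_pos (fun q _ => mul_pos (hpi0 q) (hα0 q)) Finset.univ_nonempty
  have hc : 0 < ξ / ∑ q, pi q * α q := div_pos hξ0 hs
  have hMoff : ∀ i ℓ, i ≠ ℓ → 0 < M i ℓ := by
    intro i ℓ hiℓ
    rw [hM]
    simp only [Mmat, if_neg hiℓ]
    exact mul_pos (mul_pos (mul_pos hc (hα0 i)) (hpi0 ℓ)) (hα0 ℓ)
  have hMdiag : ∀ i, 0 < M i i := by
    intro i
    rw [hM]
    simp only [Mmat, if_pos rfl, if_true]
    have h1 : ξ * α i ≤ 1 := by nlinarith [hα0 i, hα1 i]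
    have h2 : 0 < ξ / (∑ q, pi q * α q) * α i ^ 2 * pi i := by
      have := hα0 i; have := hpi0 i; positivity
    linarith
  set Mt := modM A M with hMt
  have hMtdiag : ∀ i, 0 < Mt i i := by
    intro i
    rw [hMt]
    simp only [modM, if_pos rfl, if_true]
    have hsum : 0 ≤ ∑ j ∈ Finset.univ.filter (fun j => j ≠ i ∧ A i j = 0), M i j :=
      Finset.sum_nonneg fun j hj => by
        simp only [Finset.mem_filter] at hj
        exact le_of_lt (hMoff i j (Ne.symm hj.2.1))
    linarith [hMdiag i]
  have hMtnn : ∀ i ℓ, 0 ≤ Mt i ℓ := by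
    intro i ℓ
    by_cases h : i = ℓ
    · subst h; exact le_of_lt (hMtdiag i)
    · rw [hMt]; simp only [modM, if_neg h]
      rcases hA01 i ℓ with h0 | h1
      · simp [h0]
      · rw [h1, one_mul]; exact le_of_lt (hMoff i ℓ h)
  have hApos : ∀ a b, A a b = 1 → 0 < Mt a b := by
    intro a b hab
    by_cases h : a = b
    · subst h; exact hMtdiag a
    · rw [hMt]; simp only [modM, if_neg h, hab, one_mul]
      exact hMoff a b h
  have hconn : ∀ i j, Relation.ReflTransGen (fun a b => 0 < Mt a b) i j := by
    intro i j
    exact Relation.ReflTransGen.mono (fun a b hab => hApos a b hab) _ _ (hASC i j)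
  exact key_pos Mt hMtnn hMtdiag hconn
end

section
/- (Convergence of inhomogeneous Markov chains with motion constraints) Let π ∈ ℝⁿ be a probability vector with π[i] > 0 for all i, and fix constants ξ_min > 0 and a ∈ (0,1]. Let A ∈ {0,1}^{n×n} be symmetric with A[i,i] = 1 for all i, whose associated graph on {1,…,n} (edge from i to ℓ iff A[i,ℓ] = 1) is strongly connected. Let (ξ_k)_{k≥0} satisfy ξ_k ∈ {0} ∪ [ξ_min, 1] with ξ_k > 0 for infinitely many k, let (α_k)_{k≥0} satisfy a ≤ α_k[ℓ] ≤ 1 for all k, ℓ, and let M̃_k be the modification of M(ξ_k, α_k) by A. Then for every probability vector x₀ ∈ ℝⁿ, the products x_k = x₀·M̃₀·M̃₁·⋯·M̃_{k−1} converge pointwise to π as k → ∞. -/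
open Matrix BigOperators Finset Filter

def chainRel {β : Type*} (R : β → β → Prop) : ℕ → β → β → Prop
  | 0 => Eq
  | (j+1) => fun i ℓ => ∃ w, R i w ∧ chainRel R j w ℓ

lemma chainRel_snoc {β : Type*} {R : β → β → Prop} :
    ∀ {j : ℕ} {i b ℓ : β}, chainRel R j i b → R b ℓ → chainRel R (j+1) i ℓ := by
  intro j
  induction j with
  | zero => intro i b ℓ h hb; exact ⟨ℓ, h ▸ hb, rfl⟩
  | succ j ih =>
    intro i b ℓ h hb
    obtain ⟨w, hw, hc⟩ := h
    exact ⟨w, hw, ih hc hb⟩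

lemma chainRel_of_rtg {β : Type*} {S : β → β → Prop} {R : β → β → Prop}
    (hSR : ∀ p q, S p q → R p q) {i ℓ : β} (h : Relation.ReflTransGen S i ℓ) :
    ∃ j, chainRel R j i ℓ := by
  induction h with
  | refl => exact ⟨0, rfl⟩
  | tail _ hbc ih =>
    obtain ⟨j, hj⟩ := ih
    exact ⟨j+1, chainRel_snoc hj (hSR _ _ hbc)⟩

lemma chainRel_pad {β : Type*} {R : β → β → Prop} (hrefl : ∀ x, R x x)
    {j : ℕ} {i ℓ : β} (h : chainRel R j i ℓ) (d : ℕ) : chainRel R (j + d) i ℓ := by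
  induction d with
  | zero => exact h
  | succ d ih => exact ⟨i, hrefl i, ih⟩

lemma vecMul_apply' {n : ℕ} (v : Fin n → ℝ) (M : Matrix (Fin n) (Fin n) ℝ) (ℓ : Fin n) :
    (v ᵥ* M) ℓ = ∑ i, v i * M i ℓ := by
  simp [Matrix.vecMul, dotProduct]

lemma contract_l1 {n : ℕ} (pi : Fin n → ℝ) (hpi1 : ∑ i, pi i = 1)
    (M : Matrix (Fin n) (Fin n) ℝ) (δ : ℝ)
    (hlow : ∀ i ℓ, δ * pi ℓ ≤ M i ℓ)
    (hrow : ∀ i, ∑ ℓ, M i ℓ = 1)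
    (v : Fin n → ℝ) (hv : ∑ i, v i = 0) :
    ∑ ℓ, |(v ᵥ* M) ℓ| ≤ (1 - δ) * ∑ i, |v i| := by
  have key : ∀ ℓ, |(v ᵥ* M) ℓ| ≤ ∑ i, |v i| * (M i ℓ - δ * pi ℓ) := by
    intro ℓ
    have h1 : (v ᵥ* M) ℓ = ∑ i, v i * (M i ℓ - δ * pi ℓ) := by
      rw [vecMul_apply']
      rw [Finset.sum_congr rfl (fun i _ => (mul_sub (v i) (M i ℓ) (δ * pi ℓ))), Finset.sum_sub_distrib]
      rw [← Finset.sum_mul, hv]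
      ring
    rw [h1]
    refine (Finset.abs_sum_le_sum_abs _ _).trans (Finset.sum_le_sum fun i _ => ?_)
    rw [abs_mul, abs_of_nonneg (sub_nonneg.mpr (hlow i ℓ))]
  calc ∑ ℓ, |(v ᵥ* M) ℓ| ≤ ∑ ℓ, ∑ i, |v i| * (M i ℓ - δ * pi ℓ) :=
        Finset.sum_le_sum fun ℓ _ => key ℓ
    _ = ∑ i, |v i| * ∑ ℓ, (M i ℓ - δ * pi ℓ) := by
        rw [Finset.sum_comm]
        exact Finset.sum_congr rfl fun i _ => (Finset.mul_sum _ _ _).symm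
    _ = ∑ i, |v i| * (1 - δ) := by
        refine Finset.sum_congr rfl fun i _ => ?_
        rw [Finset.sum_sub_distrib, hrow, ← Finset.mul_sum, hpi1, mul_one]
    _ = (1 - δ) * ∑ i, |v i| := by rw [← Finset.sum_mul]; ring

lemma Mmat_eq {n : ℕ} (pi αv : Fin n → ℝ) (ξ : ℝ) (i ℓ : Fin n) :
    Mmat pi αv ξ i ℓ = (if i = ℓ then 1 - ξ * αv i else 0)
      + (ξ / (∑ q, pi q * αv q)) * αv i * (pi ℓ * αv ℓ) := by
  unfold Mmat
  by_cases h : i = ℓ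
  · subst h; simp; ring
  · simp [h]; ring

lemma Mmat_rowsum {n : ℕ} (pi αv : Fin n → ℝ) (ξ : ℝ)
    (hS : (∑ q, pi q * αv q) ≠ 0) (i : Fin n) : ∑ ℓ, Mmat pi αv ξ i ℓ = 1 := by
  simp only [Mmat_eq, Finset.sum_add_distrib, Finset.sum_ite_eq, Finset.mem_univ, if_true]
  rw [← Finset.mul_sum]
  field_simp
  ring

lemma Mmat_nonneg {n : ℕ} (pi αv : Fin n → ℝ) (ξ : ℝ)
    (h0ξ : 0 ≤ ξ) (hξ1 : ξ ≤ 1) (hαv : ∀ l, 0 ≤ αv l ∧ αv l ≤ 1) (hpi : ∀ l, 0 ≤ pi l)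
    (hS : 0 < (∑ q, pi q * αv q)) (i ℓ : Fin n) : 0 ≤ Mmat pi αv ξ i ℓ := by
  unfold Mmat
  have h1 : 0 ≤ (ξ / (∑ q, pi q * αv q)) := div_nonneg h0ξ hS.le
  split
  · have h2 : ξ * αv i ≤ 1 :=
      mul_le_one₀ hξ1 (hαv i).1 (hαv i).2
    have h3 : 0 ≤ (ξ / (∑ q, pi q * αv q)) * (αv i) ^ 2 * pi i :=
      mul_nonneg (mul_nonneg h1 (sq_nonneg _)) (hpi i)
    linarith
  · exact mul_nonneg (mul_nonneg (mul_nonneg h1 (hαv i).1) (hpi ℓ)) (hαv ℓ).1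

lemma Mmat_rev {n : ℕ} (pi αv : Fin n → ℝ) (ξ : ℝ) (i ℓ : Fin n) :
    pi i * Mmat pi αv ξ i ℓ = pi ℓ * Mmat pi αv ξ ℓ i := by
  unfold Mmat
  by_cases h : i = ℓ
  · subst h; ring
  · simp only [h, Ne.symm h, if_false]; ring

lemma Mmat_zero {n : ℕ} (pi αv : Fin n → ℝ) : Mmat pi αv 0 = 1 := by
  funext i ℓ
  unfold Mmat
  by_cases h : i = ℓ
  · subst h; simp
  · simp [h, Matrix.one_apply_ne h]

lemma modM_one {n : ℕ} (A : Matrix (Fin n) (Fin n) ℝ) : modM A 1 = 1 := by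
  funext i ℓ
  unfold modM
  by_cases h : i = ℓ
  · subst h
    simp only [if_true]
    rw [Matrix.one_apply_eq]
    have : ∀ j ∈ Finset.univ.filter (fun j => j ≠ i ∧ A i j = 0), (1 : Matrix (Fin n) (Fin n) ℝ) i j = 0 := by
      intro j hj
      rw [Finset.mem_filter] at hj
      exact Matrix.one_apply_ne (Ne.symm hj.2.1)
    rw [Finset.sum_congr rfl this]
    simp
  · simp [h, Matrix.one_apply_ne h]

lemma modM_nonneg {n : ℕ} (A M : Matrix (Fin n) (Fin n) ℝ)
    (hA01 : ∀ i ℓ, A i ℓ = 0 ∨ A i ℓ = 1) (hM0 : ∀ i ℓ, 0 ≤ M i ℓ) (i ℓ : Fin n) :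
    0 ≤ modM A M i ℓ := by
  unfold modM
  split
  · exact add_nonneg (hM0 i i) (Finset.sum_nonneg fun j _ => hM0 i j)
  · rcases hA01 i ℓ with h | h <;> rw [h] <;> simp [hM0 i ℓ]

lemma modM_rev {n : ℕ} (pi : Fin n → ℝ) (A M : Matrix (Fin n) (Fin n) ℝ)
    (hAsymm : ∀ i ℓ, A i ℓ = A ℓ i)
    (hrev : ∀ i ℓ, pi i * M i ℓ = pi ℓ * M ℓ i) (i ℓ : Fin n) :
    pi i * modM A M i ℓ = pi ℓ * modM A M ℓ i := by
  unfold modM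
  by_cases h : i = ℓ
  · subst h; rfl
  · simp only [h, Ne.symm h, if_false]
    rw [hAsymm i ℓ]
    calc pi i * (A ℓ i * M i ℓ) = A ℓ i * (pi i * M i ℓ) := by ring
      _ = A ℓ i * (pi ℓ * M ℓ i) := by rw [hrev]
      _ = pi ℓ * (A ℓ i * M ℓ i) := by ring

lemma modM_diag_eq {n : ℕ} (A M : Matrix (Fin n) (Fin n) ℝ) (i : Fin n) :
    modM A M i i = M i i + ∑ ℓ ∈ Finset.univ.erase i, (if A i ℓ = 0 then M i ℓ else 0) := by
  unfold modM
  rw [if_pos rfl]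
  congr 1
  rw [Finset.sum_filter,
    show Finset.univ.erase i = Finset.univ.filter (fun j => j ≠ i) from by ext j; simp,
    Finset.sum_filter]
  refine Finset.sum_congr rfl fun j _ => ?_
  by_cases hj : j = i
  · simp [hj]
  · by_cases hA : A i j = 0 <;> simp [hj, hA]

lemma modM_rowsum {n : ℕ} (A M : Matrix (Fin n) (Fin n) ℝ)
    (hA01 : ∀ i ℓ, A i ℓ = 0 ∨ A i ℓ = 1) (i : Fin n) :
    ∑ ℓ, modM A M i ℓ = ∑ ℓ, M i ℓ := by
  have key : ∀ ℓ ∈ Finset.univ.erase i,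
      modM A M i ℓ = M i ℓ - (if A i ℓ = 0 then M i ℓ else 0) := by
    intro ℓ hℓ
    rw [Finset.mem_erase] at hℓ
    unfold modM
    rw [if_neg (Ne.symm hℓ.1)]
    rcases hA01 i ℓ with h | h <;> simp [h]
  rw [← Finset.add_sum_erase _ _ (Finset.mem_univ i),
    ← Finset.add_sum_erase _ (fun ℓ => M i ℓ) (Finset.mem_univ i),
    modM_diag_eq, Finset.sum_congr rfl key, Finset.sum_sub_distrib]
  ring



noncomputable def Wprod {n : ℕ} (P : ℕ → Matrix (Fin n) (Fin n) ℝ) (k m : ℕ) :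
    Matrix (Fin n) (Fin n) ℝ :=
  ((List.range' k (m - k)).map P).prod

lemma Wprod_self {n : ℕ} (P : ℕ → Matrix (Fin n) (Fin n) ℝ) (k : ℕ) : Wprod P k k = 1 := by
  simp [Wprod]

lemma Wprod_succ {n : ℕ} (P : ℕ → Matrix (Fin n) (Fin n) ℝ) {k m : ℕ} (h : k ≤ m) :
    Wprod P k (m + 1) = Wprod P k m * P m := by
  unfold Wprod
  rw [show m + 1 - k = (m - k) + 1 from by omega, List.range'_concat,
    show k + 1 * (m - k) = m from by omega, List.map_append, List.prod_append]
  simp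

lemma Wprod_comp {n : ℕ} (P : ℕ → Matrix (Fin n) (Fin n) ℝ) {k m m' : ℕ}
    (h1 : k ≤ m) (h2 : m ≤ m') :
    Wprod P k m * Wprod P m m' = Wprod P k m' := by
  unfold Wprod
  rw [← List.prod_append, ← List.map_append,
    show List.range' k (m - k) ++ List.range' m (m' - m)
      = List.range' k (m' - k) from by
        calc List.range' k (m - k) ++ List.range' m (m' - m)
            = List.range' k (m - k) ++ List.range' (k + (m - k)) (m' - m) := by
              rw [show k + (m - k) = m from by omega]
          _ = List.range' k ((m' - m) + (m - k)) := by rw [List.range'_append_1, Nat.add_comm]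
          _ = List.range' k (m' - k) := by rw [show (m' - m) + (m - k) = m' - k from by omega]]

lemma Wprod_one {n : ℕ} (P : ℕ → Matrix (Fin n) (Fin n) ℝ) {k m : ℕ} (h : k ≤ m)
    (hid : ∀ j, k ≤ j → j < m → P j = 1) : Wprod P k m = 1 := by
  induction m with
  | zero => rw [show k = 0 from by omega]; exact Wprod_self P 0
  | succ m ih =>
    rcases Nat.eq_or_lt_of_le h with h' | h'
    · rw [← h']; exact Wprod_self P k
    · have hk : k ≤ m := by omega
      rw [Wprod_succ P hk, ih hk (fun j hj1 hj2 => hid j hj1 (by omega)),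
        hid m hk (by omega), one_mul]

lemma mul_entry_ge {n : ℕ} (B C : Matrix (Fin n) (Fin n) ℝ)
    (hB : ∀ i ℓ, 0 ≤ B i ℓ) (hC : ∀ i ℓ, 0 ≤ C i ℓ) (i w ℓ : Fin n) :
    B i w * C w ℓ ≤ (B * C) i ℓ := by
  rw [Matrix.mul_apply]
  exact Finset.single_le_sum (fun q _ => mul_nonneg (hB i q) (hC q ℓ)) (Finset.mem_univ w)


/-- convergence of the inhomogeneous Markov chain with motion constraints.
With `pi` entrywise positive, a strongly connected symmetric 0-1 constraint matrix `A`
with unit diagonal, `ξ_k ∈ {0} ∪ [ξmin, 1]` with `ξ_k > 0` infinitely often, and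
`a ≤ α_k[ℓ] ≤ 1`, the iterates `x_{k+1} = x_k · M̃_k` (where `M̃_k` is the modification of
`M(ξ_k, α_k)` by `A`) converge pointwise to `pi` from any initial probability vector. -/
theorem stmt13 {n : ℕ} (hn : 1 ≤ n) (pi : Fin n → ℝ)
    (hpi0 : ∀ i, 0 < pi i) (hpi1 : ∑ i, pi i = 1)
    (ξmin : ℝ) (hξmin : 0 < ξmin) (a : ℝ) (ha0 : 0 < a) (ha1 : a ≤ 1)
    (A : Matrix (Fin n) (Fin n) ℝ)
    (hA01 : ∀ i ℓ, A i ℓ = 0 ∨ A i ℓ = 1)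
    (hAsymm : ∀ i ℓ, A i ℓ = A ℓ i)
    (hAdiag : ∀ i, A i i = 1)
    (hASC : ∀ i ℓ, Relation.ReflTransGen (fun p q => A p q = 1) i ℓ)
    (ξ : ℕ → ℝ) (hξ : ∀ k, ξ k = 0 ∨ (ξmin ≤ ξ k ∧ ξ k ≤ 1))
    (hξinf : ∀ N : ℕ, ∃ k, N ≤ k ∧ 0 < ξ k)
    (α : ℕ → Fin n → ℝ) (hα : ∀ k ℓ, a ≤ α k ℓ ∧ α k ℓ ≤ 1)
    (x₀ : Fin n → ℝ) (hx₀0 : ∀ i, 0 ≤ x₀ i) (hx₀1 : ∑ i, x₀ i = 1)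
    (x : ℕ → Fin n → ℝ) (hx0 : x 0 = x₀)
    (hxk : ∀ k, x (k + 1) = x k ᵥ* modM A (Mmat pi (α k) (ξ k))) :
    ∀ i, Tendsto (fun k => x k i) atTop (nhds (pi i)) := by
  classical
  have hne : Nonempty (Fin n) := ⟨⟨0, hn⟩⟩
  set P : ℕ → Matrix (Fin n) (Fin n) ℝ := fun k => modM A (Mmat pi (α k) (ξ k)) with hPdef
  -- basic scalar facts
  have hα0 : ∀ k l, 0 ≤ α k l := fun k l => le_trans ha0.le (hα k l).1
  have hξb : ∀ k, 0 ≤ ξ k ∧ ξ k ≤ 1 := by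
    intro k
    rcases hξ k with h | h
    · rw [h]; norm_num
    · exact ⟨le_trans hξmin.le h.1, h.2⟩
  have hξmin1 : ξmin ≤ 1 := by
    obtain ⟨k0, -, hk0⟩ := hξinf 0
    rcases hξ k0 with h | h
    · rw [h] at hk0; linarith
    · linarith [h.1, h.2]
  have hS0 : ∀ k, 0 < ∑ q, pi q * α k q := fun k =>
    Finset.sum_pos (fun q _ => mul_pos (hpi0 q) (lt_of_lt_of_le ha0 (hα k q).1))
      Finset.univ_nonempty
  have hS1 : ∀ k, (∑ q, pi q * α k q) ≤ 1 := by
    intro k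
    calc (∑ q, pi q * α k q) ≤ ∑ q, pi q :=
          Finset.sum_le_sum fun q _ => mul_le_of_le_one_right (hpi0 q).le (hα k q).2
      _ = 1 := hpi1
  have hpile : ∀ l, pi l ≤ 1 := by
    intro l
    rw [← hpi1]
    exact Finset.single_le_sum (fun q (_ : q ∈ Finset.univ) => (hpi0 q).le) (Finset.mem_univ l)
  -- pmin
  obtain ⟨im, -, hpm⟩ := Finset.exists_min_image Finset.univ pi Finset.univ_nonempty
  set pm := pi im with hpmdef
  have hpm0 : 0 < pm := hpi0 im
  have hpml : ∀ l, pm ≤ pi l := fun l => hpm l (Finset.mem_univ l)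
  have hpm1 : pm ≤ 1 := hpile im
  -- facts about P
  have hMnn : ∀ k i ℓ, 0 ≤ Mmat pi (α k) (ξ k) i ℓ := fun k i ℓ =>
    Mmat_nonneg pi (α k) (ξ k) (hξb k).1 (hξb k).2 (fun l => ⟨hα0 k l, (hα k l).2⟩)
      (fun l => (hpi0 l).le) (hS0 k) i ℓ
  have hP0 : ∀ k i ℓ, 0 ≤ P k i ℓ := fun k i ℓ =>
    modM_nonneg A _ hA01 (hMnn k) i ℓ
  have hProw : ∀ k i, ∑ ℓ, P k i ℓ = 1 := fun k i => by
    rw [hPdef]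
    rw [modM_rowsum A _ hA01 i, Mmat_rowsum pi (α k) (ξ k) (hS0 k).ne' i]
  have hPstat : ∀ k ℓ, ∑ i, pi i * P k i ℓ = pi ℓ := by
    intro k ℓ
    have hrev : ∀ i j, pi i * P k i j = pi j * P k j i := fun i j =>
      modM_rev pi A _ hAsymm (fun i j => Mmat_rev pi (α k) (ξ k) i j) i j
    calc ∑ i, pi i * P k i ℓ = ∑ i, pi ℓ * P k ℓ i :=
          Finset.sum_congr rfl fun i _ => hrev i ℓ
      _ = pi ℓ * ∑ i, P k ℓ i := (Finset.mul_sum _ _ _).symm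
      _ = pi ℓ := by rw [hProw k ℓ, mul_one]
  have hPid : ∀ j, ξ j = 0 → P j = 1 := by
    intro j hj
    rw [hPdef]
    simp only
    rw [hj, Mmat_zero, modM_one]
  -- products
  set W : ℕ → ℕ → Matrix (Fin n) (Fin n) ℝ := Wprod P with hWdef
  have hW0 : ∀ k m, k ≤ m → ∀ i ℓ, 0 ≤ W k m i ℓ := by
    intro k m hkm
    induction m, hkm using Nat.le_induction with
    | base => intro i ℓ; rw [hWdef, Wprod_self]; rcases eq_or_ne i ℓ with h | h
              · rw [h, Matrix.one_apply_eq]; norm_num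
              · rw [Matrix.one_apply_ne h]
    | succ m hkm ih =>
      intro i ℓ
      rw [hWdef, Wprod_succ P hkm, Matrix.mul_apply]
      exact Finset.sum_nonneg fun q _ => mul_nonneg (ih i q) (hP0 m q ℓ)
  have hWrow : ∀ k m, k ≤ m → ∀ i, ∑ ℓ, W k m i ℓ = 1 := by
    intro k m hkm
    induction m, hkm using Nat.le_induction with
    | base => intro i; rw [hWdef, Wprod_self]; simp [Matrix.one_apply]
    | succ m hkm ih =>
      intro i
      rw [hWdef, Wprod_succ P hkm]
      simp only [Matrix.mul_apply]
      rw [Finset.sum_comm]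
      calc ∑ q, ∑ ℓ, W k m i q * P m q ℓ = ∑ q, W k m i q * ∑ ℓ, P m q ℓ :=
            Finset.sum_congr rfl fun q _ => (Finset.mul_sum _ _ _).symm
        _ = ∑ q, W k m i q := Finset.sum_congr rfl fun q _ => by rw [hProw m q, mul_one]
        _ = 1 := ih i
  have hWstat : ∀ k m, k ≤ m → ∀ ℓ, ∑ i, pi i * W k m i ℓ = pi ℓ := by
    intro k m hkm
    induction m, hkm using Nat.le_induction with
    | base => intro ℓ; rw [hWdef, Wprod_self]; simp [Matrix.one_apply]
    | succ m hkm ih =>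
      intro ℓ
      rw [hWdef, Wprod_succ P hkm]
      simp only [Matrix.mul_apply, Finset.mul_sum]
      rw [Finset.sum_comm]
      calc ∑ q, ∑ i, pi i * (W k m i q * P m q ℓ)
          = ∑ q, (∑ i, pi i * W k m i q) * P m q ℓ := by
            refine Finset.sum_congr rfl fun q _ => ?_
            rw [Finset.sum_mul]
            exact Finset.sum_congr rfl fun i _ => by ring
        _ = ∑ q, pi q * P m q ℓ := Finset.sum_congr rfl fun q _ => by rw [ih q]
        _ = pi ℓ := hPstat m ℓ
  have hxW : ∀ k m, k ≤ m → x m = x k ᵥ* W k m := by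
    intro k m hkm
    induction m, hkm using Nat.le_induction with
    | base => rw [hWdef, Wprod_self, Matrix.vecMul_one]
    | succ m hkm ih =>
      rw [hWdef, Wprod_succ P hkm, hxk m, ih, Matrix.vecMul_vecMul]
  -- entrywise lower bound for active steps
  set c : ℝ := (ξmin * a) * (pm * a) with hcdef
  have hc0 : 0 < c := by positivity
  have hc1 : c ≤ 1 :=
    mul_le_one₀ (mul_le_one₀ hξmin1 ha0.le ha1) (by positivity) (mul_le_one₀ hpm1 ha0.le ha1)
  have hPc : ∀ k, 0 < ξ k → ∀ i ℓ, (i = ℓ ∨ A i ℓ = 1) → c ≤ P k i ℓ := by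
    intro k hk i ℓ hR
    have hξm : ξmin ≤ ξ k ∧ ξ k ≤ 1 := by
      rcases hξ k with h | h
      · rw [h] at hk; linarith
      · exact h
    have hdiv : ξmin ≤ ξ k / (∑ q, pi q * α k q) := by
      refine le_trans hξm.1 ?_
      rw [le_div_iff₀ (hS0 k)]
      exact mul_le_of_le_one_right (hξb k).1 (hS1 k)
    have hdivnn : 0 ≤ ξ k / (∑ q, pi q * α k q) := div_nonneg (hξb k).1 (hS0 k).le
    have hkey : ∀ u w v : Fin n,
        c ≤ ξ k / (∑ q, pi q * α k q) * α k u * (pi w * α k v) := by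
      intro u w v
      rw [hcdef]
      refine mul_le_mul ?_ ?_ (by positivity) (mul_nonneg hdivnn (hα0 k u))
      · exact mul_le_mul hdiv (hα k u).1 ha0.le hdivnn
      · exact mul_le_mul (hpml w) (hα k v).1 ha0.le (hpi0 w).le
    by_cases he : i = ℓ
    · subst he
      have hd := modM_diag_eq A (Mmat pi (α k) (ξ k)) i
      have hsum0 : 0 ≤ ∑ l ∈ Finset.univ.erase i,
          (if A i l = 0 then Mmat pi (α k) (ξ k) i l else 0) := by
        refine Finset.sum_nonneg fun l _ => ?_
        split
        · exact hMnn k i l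
        · exact le_refl 0
      have hM : Mmat pi (α k) (ξ k) i i
          = 1 - ξ k * α k i + (ξ k / (∑ q, pi q * α k q)) * (α k i) ^ 2 * pi i := by
        simp only [Mmat, if_pos rfl, if_true]
      have h1 : ξ k * α k i ≤ 1 := mul_le_one₀ (hξb k).2 (hα0 k i) (hα k i).2
      have h2 : c ≤ ξ k / (∑ q, pi q * α k q) * α k i * (pi i * α k i) := hkey i i i
      have h3 : ξ k / (∑ q, pi q * α k q) * (α k i) ^ 2 * pi i
          = ξ k / (∑ q, pi q * α k q) * α k i * (pi i * α k i) := by ring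
      have h4 : P k i i = Mmat pi (α k) (ξ k) i i + ∑ l ∈ Finset.univ.erase i,
          (if A i l = 0 then Mmat pi (α k) (ξ k) i l else 0) := hd
      rw [h4, hM]
      linarith
    · have hA1 : A i ℓ = 1 := hR.resolve_left he
      have hoff : P k i ℓ = ξ k / (∑ q, pi q * α k q) * α k i * pi ℓ * α k ℓ := by
        rw [hPdef]
        simp only [modM, Mmat, if_neg he, hA1, one_mul]
      rw [hoff]
      calc c ≤ ξ k / (∑ q, pi q * α k q) * α k i * (pi ℓ * α k ℓ) := hkey i ℓ ℓ
        _ = ξ k / (∑ q, pi q * α k q) * α k i * pi ℓ * α k ℓ := by ring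
    -- the "next active step" machinery
  have Rrefl : ∀ y : Fin n, y = y ∨ A y y = 1 := fun y => Or.inl rfl
  let nxt : ℕ → ℕ := fun N => Nat.find (hξinf N)
  have hnxt : ∀ N, N ≤ nxt N ∧ 0 < ξ (nxt N) := fun N => Nat.find_spec (hξinf N)
  have hnxtmin : ∀ N j, N ≤ j → j < nxt N → ξ j = 0 := by
    intro N j h1 h2
    have hmin := Nat.find_min (hξinf N) h2
    rcases hξ j with h | h
    · exact h
    · exact absurd ⟨h1, by linarith⟩ hmin
  set s : ℕ → ℕ := fun N => nxt N + 1 with hsdef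
  have hsgt : ∀ N, N < s N := fun N => Nat.lt_succ_of_le (hnxt N).1
  have hsle : ∀ (j N : ℕ), N ≤ s^[j] N := by
    intro j
    induction j with
    | zero => intro N; exact le_refl N
    | succ j ih =>
      intro N
      rw [Function.iterate_succ_apply']
      exact le_trans (ih N) (hsgt _).le
  have hWs : ∀ k, W k (s k) = P (nxt k) := by
    intro k
    have h1 : W k (nxt k) = 1 :=
      Wprod_one P (hnxt k).1 (fun j hj1 hj2 => hPid j (hnxtmin k j hj1 hj2))
    rw [hWdef] at h1 ⊢
    rw [show s k = nxt k + 1 from rfl, Wprod_succ P (hnxt k).1, h1, one_mul]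
  have hWc : ∀ (j k : ℕ) (i ℓ : Fin n),
      chainRel (fun p q => p = q ∨ A p q = 1) j i ℓ → c ^ j ≤ W k (s^[j] k) i ℓ := by
    intro j
    induction j with
    | zero =>
      intro k i ℓ h
      have hiℓ : i = ℓ := h
      subst hiℓ
      rw [Function.iterate_zero_apply, hWdef, Wprod_self, Matrix.one_apply_eq, pow_zero]
    | succ j ih =>
      intro k i ℓ h
      obtain ⟨w, hw, hcn⟩ := h
      rw [Function.iterate_succ_apply]
      have h1 : k ≤ s k := (hsgt k).le
      have h2 : s k ≤ s^[j] (s k) := hsle j (s k)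
      have hcomp : W k (s^[j] (s k)) = W k (s k) * W (s k) (s^[j] (s k)) := by
        rw [hWdef]; exact (Wprod_comp P h1 h2).symm
      rw [hcomp]
      calc c ^ (j+1) = c * c ^ j := by ring
        _ ≤ W k (s k) i w * W (s k) (s^[j] (s k)) w ℓ := by
            refine mul_le_mul ?_ (ih (s k) w ℓ hcn) (pow_nonneg hc0.le j) ?_
            · rw [hWs k]; exact hPc (nxt k) (hnxt k).2 i w hw
            · rw [hWs k]; exact hP0 (nxt k) i w
        _ ≤ (W k (s k) * W (s k) (s^[j] (s k))) i ℓ :=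
            mul_entry_ge _ _ (hW0 k (s k) h1) (hW0 (s k) _ h2) i w ℓ
  -- uniform chain length
  have hchain : ∀ i ℓ : Fin n, ∃ j, chainRel (fun p q => p = q ∨ A p q = 1) j i ℓ :=
    fun i ℓ => chainRel_of_rtg (fun p q h => Or.inr h) (hASC i ℓ)
  choose f hf using hchain
  set L : ℕ := Finset.univ.sup (fun i => Finset.univ.sup (f i)) with hLdef
  have hfL : ∀ i ℓ, f i ℓ ≤ L := fun i ℓ =>
    le_trans (Finset.le_sup (Finset.mem_univ ℓ))
      (Finset.le_sup (f := fun i => Finset.univ.sup (f i)) (Finset.mem_univ i))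
  have hchainL : ∀ i ℓ, chainRel (fun p q => p = q ∨ A p q = 1) L i ℓ := by
    intro i ℓ
    have h := chainRel_pad Rrefl (hf i ℓ) (L - f i ℓ)
    rwa [Nat.add_sub_cancel' (hfL i ℓ)] at h
  set δ : ℝ := c ^ L with hδdef
  have hδ0 : 0 < δ := pow_pos hc0 L
  have hδ1 : δ ≤ 1 := pow_le_one₀ hc0.le hc1
  -- x k is a probability vector
  have hsum : ∀ k, ∑ i, x k i = 1 := by
    intro k
    induction k with
    | zero => rw [hx0]; exact hx₀1
    | succ k ih =>
      rw [hxk k]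
      rw [Finset.sum_congr rfl (fun ℓ (_ : ℓ ∈ Finset.univ) => vecMul_apply' (x k) (P k) ℓ)]
      rw [Finset.sum_comm]
      calc ∑ i, ∑ ℓ, x k i * P k i ℓ = ∑ i, x k i * ∑ ℓ, P k i ℓ :=
            Finset.sum_congr rfl fun i _ => (Finset.mul_sum _ _ _).symm
        _ = ∑ i, x k i := Finset.sum_congr rfl fun i _ => by rw [hProw k i, mul_one]
        _ = 1 := ih
  have hv0 : ∀ k, ∑ i, (x k i - pi i) = 0 := by
    intro k; rw [Finset.sum_sub_distrib, hsum k, hpi1, sub_self]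
  set V : ℕ → ℝ := fun k => ∑ i, |x k i - pi i| with hVdef
  have hπW : ∀ k m, k ≤ m → pi ᵥ* W k m = pi := by
    intro k m hkm; funext ℓ; rw [vecMul_apply']; exact hWstat k m hkm ℓ
  have hvecW : ∀ k m, k ≤ m → (fun i => x k i - pi i) ᵥ* W k m = fun ℓ => x m ℓ - pi ℓ := by
    intro k m hkm
    have h1 : (fun i => x k i - pi i) = x k - pi := rfl
    rw [h1, Matrix.sub_vecMul, ← hxW k m hkm, hπW k m hkm]
    rfl
  have hVle : ∀ k m, k ≤ m → ∀ (δ' : ℝ),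
      (∀ i ℓ, δ' * pi ℓ ≤ W k m i ℓ) → V m ≤ (1 - δ') * V k := by
    intro k m hkm δ' hlow
    have h := contract_l1 pi hpi1 (W k m) δ' hlow (hWrow k m hkm)
      (fun i => x k i - pi i) (hv0 k)
    rw [hvecW k m hkm] at h
    exact h
  have hVmono : ∀ k m, k ≤ m → V m ≤ V k := by
    intro k m hkm
    have h := hVle k m hkm 0 (fun i ℓ => by rw [zero_mul]; exact hW0 k m hkm i ℓ)
    linarith
  have hVcontr : ∀ k, V (s^[L] k) ≤ (1 - δ) * V k := by
    intro k
    refine hVle k (s^[L] k) (hsle L k) δ (fun i ℓ => ?_)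
    calc δ * pi ℓ ≤ δ * 1 := mul_le_mul_of_nonneg_left (hpile ℓ) hδ0.le
      _ = δ := mul_one δ
      _ = c ^ L := hδdef
      _ ≤ W k (s^[L] k) i ℓ := hWc L k i ℓ (hchainL i ℓ)
  set K : ℕ → ℕ := fun j => (fun k => s^[L] k)^[j] 0 with hKdef
  have hKV : ∀ j, V (K j) ≤ (1 - δ) ^ j * V 0 := by
    intro j
    induction j with
    | zero => rw [hKdef]; simp
    | succ j ih =>
      have hK1 : K (j+1) = s^[L] (K j) := Function.iterate_succ_apply' (fun k => s^[L] k) j 0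
      rw [hK1]
      calc V (s^[L] (K j)) ≤ (1 - δ) * V (K j) := hVcontr (K j)
        _ ≤ (1 - δ) * ((1 - δ) ^ j * V 0) :=
            mul_le_mul_of_nonneg_left ih (by linarith)
        _ = (1 - δ) ^ (j+1) * V 0 := by ring
  have hVnn : ∀ k, 0 ≤ V k := fun k => Finset.sum_nonneg fun i _ => abs_nonneg _
  have hVtend : Tendsto V atTop (nhds 0) := by
    rw [Metric.tendsto_atTop]
    intro ε hε
    have htend : Tendsto (fun j : ℕ => (1 - δ) ^ j * V 0) atTop (nhds 0) := by
      have h1 : Tendsto (fun j : ℕ => (1 - δ) ^ j) atTop (nhds 0) :=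
        tendsto_pow_atTop_nhds_zero_of_lt_one (by linarith) (by linarith)
      simpa using h1.mul_const (V 0)
    obtain ⟨j, hj⟩ := (htend.eventually (gt_mem_nhds hε)).exists
    refine ⟨K j, fun k hk => ?_⟩
    rw [Real.dist_eq, sub_zero, abs_of_nonneg (hVnn k)]
    exact lt_of_le_of_lt (le_trans (hVmono (K j) k hk) (hKV j)) hj
  intro i
  have habs : Tendsto (fun k => x k i - pi i) atTop (nhds 0) := by
    apply squeeze_zero_norm (fun k => ?_) hVtend
    show ‖x k i - pi i‖ ≤ V k
    rw [Real.norm_eq_abs]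
    exact Finset.single_le_sum (fun q (_ : q ∈ Finset.univ) => abs_nonneg (x k q - pi q))
      (Finset.mem_univ i)
  have hfin := habs.add_const (pi i)
  simpa using hfin
end
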